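/- Let B₁, B₂ be symmetric n×n real matrices satisfying mI ⪯ B₁ ⪯ MI and mI ⪯ B₂ ⪯ MI for some 0 < m ≤ M < ∞. Let β₁ > 0, β₂ = 4β₁M⁴/m², and λ_m = min{β₁m/2, β₁m³}. Then the block matrix W = [[β₁B₁B₂B₁ + β₂B₁, β₁B₁B₂], [β₁B₂B₁, β₁B₂]] satisfies W ≻ λ_m I (i.e., W − λ_m I is positive definite). -/

import Mathlib

open Matrix

private lemma dp_self_nonneg {k : ℕ} (v : Fin k → ℝ) : 0 ≤ v ⬝ᵥ v :=
  Finset.sum_nonneg fun i _ => mul_self_nonneg (v i)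

private lemma dp_symm {n : ℕ} {A : Matrix (Fin n) (Fin n) ℝ} (hA : A.IsSymm)
    (x w : Fin n → ℝ) : (A *ᵥ x) ⬝ᵥ w = x ⬝ᵥ (A *ᵥ w) := by
  rw [dotProduct_mulVec, ← mulVec_transpose, hA.eq]

private lemma quad_id {n : ℕ} (B₁ B₂ : Matrix (Fin n) (Fin n) ℝ) (h1 : B₁.IsSymm)
    (x y : Fin n → ℝ) (c₁ c₂ lam : ℝ) :
    Sum.elim x y ⬝ᵥ ((Matrix.fromBlocks (c₁ • (B₁ * B₂ * B₁) + c₂ • B₁) (c₁ • (B₁ * B₂))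
        (c₁ • (B₂ * B₁)) (c₁ • B₂)
      - lam • (1 : Matrix (Fin n ⊕ Fin n) (Fin n ⊕ Fin n) ℝ)) *ᵥ Sum.elim x y)
    = c₁ * ((B₁ *ᵥ x + y) ⬝ᵥ (B₂ *ᵥ (B₁ *ᵥ x + y))) + c₂ * (x ⬝ᵥ (B₁ *ᵥ x))
      - lam * (x ⬝ᵥ x) - lam * (y ⬝ᵥ y) := by
  have e1 : (B₁ *ᵥ x) ⬝ᵥ (B₂ *ᵥ (B₁ *ᵥ x)) = x ⬝ᵥ ((B₁ * B₂ * B₁) *ᵥ x) := by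
    rw [dp_symm h1, mulVec_mulVec, mulVec_mulVec]
  have e2 : (B₁ *ᵥ x) ⬝ᵥ (B₂ *ᵥ y) = x ⬝ᵥ ((B₁ * B₂) *ᵥ y) := by
    rw [dp_symm h1, mulVec_mulVec]
  have e3 : y ⬝ᵥ (B₂ *ᵥ (B₁ *ᵥ x)) = y ⬝ᵥ ((B₂ * B₁) *ᵥ x) := by
    rw [mulVec_mulVec]
  simp only [sub_mulVec, fromBlocks_mulVec, smul_mulVec, one_mulVec, add_mulVec,
    mulVec_add, dotProduct_sub, dotProduct_add, add_dotProduct, dotProduct_smul, smul_eq_mul,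
    sumElim_dotProduct_sumElim, Sum.elim_comp_inl, Sum.elim_comp_inr]
  rw [e1, e2, e3]
  ring

private lemma key_bound {n : ℕ} (B : Matrix (Fin n) (Fin n) ℝ) (hB : B.PosSemidef) (M : ℝ)
    (hu : (M • (1 : Matrix (Fin n) (Fin n) ℝ) - B).PosSemidef) (x : Fin n → ℝ) :
    x ⬝ᵥ ((B * B) *ᵥ x) ≤ M * (x ⬝ᵥ (B *ᵥ x)) := by
  obtain ⟨S, hSH, hS2⟩ : ∃ S : Matrix (Fin n) (Fin n) ℝ, Sᴴ = S ∧ S * S = B :=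
    open scoped MatrixOrder in
    ⟨CFC.sqrt B, (Matrix.nonneg_iff_posSemidef.mp (CFC.sqrt_nonneg B)).1,
      CFC.sqrt_mul_sqrt_self B (Matrix.nonneg_iff_posSemidef.mpr hB)⟩
  have hpsd := hu.conjTranspose_mul_mul_same S
  have hmat : Sᴴ * (M • (1 : Matrix (Fin n) (Fin n) ℝ) - B) * S = M • B - B * B := by
    rw [hSH, Matrix.mul_sub, Matrix.sub_mul]
    congr 1
    · rw [Matrix.mul_smul, Matrix.mul_one, Matrix.smul_mul, hS2]
    · rw [← hS2]; simp only [← Matrix.mul_assoc]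
  have hkey := hpsd.dotProduct_mulVec_nonneg x
  rw [hmat] at hkey
  simp only [star_trivial, sub_mulVec, smul_mulVec, dotProduct_sub,
    dotProduct_smul, smul_eq_mul] at hkey
  linarith

set_option maxHeartbeats 1000000 in
theorem block_matrix_posdef (n : ℕ) (B₁ B₂ : Matrix (Fin n) (Fin n) ℝ)
    (hB₁ : B₁.IsSymm) (hB₂ : B₂.IsSymm) (m M : ℝ)
    (hm : 0 < m) (hmM : m ≤ M)
    (hB₁l : (B₁ - m • (1 : Matrix (Fin n) (Fin n) ℝ)).PosSemidef)
    (hB₁u : (M • (1 : Matrix (Fin n) (Fin n) ℝ) - B₁).PosSemidef)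
    (hB₂l : (B₂ - m • (1 : Matrix (Fin n) (Fin n) ℝ)).PosSemidef)
    (hB₂u : (M • (1 : Matrix (Fin n) (Fin n) ℝ) - B₂).PosSemidef)
    (β₁ : ℝ) (hβ₁ : 0 < β₁) :
    (Matrix.fromBlocks
        (β₁ • (B₁ * B₂ * B₁) + (4 * β₁ * M ^ 4 / m ^ 2) • B₁) (β₁ • (B₁ * B₂))
        (β₁ • (B₂ * B₁)) (β₁ • B₂)
      - min (β₁ * m / 2) (β₁ * m ^ 3) •
        (1 : Matrix (Fin n ⊕ Fin n) (Fin n ⊕ Fin n) ℝ)).PosDef := by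
  have hM0 : 0 < M := lt_of_lt_of_le hm hmM
  set c₂ : ℝ := 4 * β₁ * M ^ 4 / m ^ 2 with hc₂
  set lam : ℝ := min (β₁ * m / 2) (β₁ * m ^ 3) with hlam
  have hlam1 : lam ≤ β₁ * m / 2 := min_le_left _ _
  have hlam2 : lam ≤ β₁ * m ^ 3 := min_le_right _ _
  have hlam0 : 0 < lam := lt_min (by positivity) (by positivity)
  have hβ₂m : c₂ * m ^ 2 = 4 * β₁ * M ^ 4 := by
    rw [hc₂]; field_simp
  -- B₁ is positive semidefinite
  have hB₁psd : B₁.PosSemidef := by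
    refine PosSemidef.of_dotProduct_mulVec_nonneg
      ((conjTranspose_eq_transpose_of_trivial B₁).trans hB₁.eq) fun u => ?_
    have h1 := hB₁l.dotProduct_mulVec_nonneg u
    simp only [star_trivial, sub_mulVec, smul_mulVec, one_mulVec, dotProduct_sub,
      dotProduct_smul, smul_eq_mul] at h1 ⊢
    nlinarith [dp_self_nonneg u, hm.le]
  -- scalar constant inequalities
  have hA' : lam * m ≤ β₁ * M ^ 4 := by
    have h4 : m ^ 4 ≤ M ^ 4 := pow_le_pow_left₀ hm.le hmM 4
    nlinarith [mul_le_mul_of_nonneg_right hlam2 hm.le,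
      mul_le_mul_of_nonneg_left h4 hβ₁.le]
  have hB' : 2 * lam * M * m ^ 2 ≤ β₁ * M ^ 4 := by
    have h3 : m ^ 3 ≤ M ^ 3 := pow_le_pow_left₀ hm.le hmM 3
    nlinarith [mul_le_mul_of_nonneg_right (show 2 * lam ≤ β₁ * m by linarith)
        (show (0:ℝ) ≤ M * m ^ 2 by positivity),
      mul_le_mul_of_nonneg_left h3 (show (0:ℝ) ≤ β₁ * M by positivity)]
  have hm2 : (0:ℝ) < m ^ 2 := by positivity
  have hβM : (0:ℝ) < β₁ * M ^ 4 := by positivity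
  have c1 : 0 < c₂ - 2 * lam * M := by nlinarith [hβ₂m, hB', hm2, hβM]
  have c2 : 0 < (c₂ - 2 * lam * M) * m - lam := by nlinarith [hβ₂m, hB', hA', hm, hβM]
  have hlamlt : lam < β₁ * m := by nlinarith [mul_pos hβ₁ hm]
  refine PosDef.of_dotProduct_mulVec_pos ?_ ?_
  · -- Hermitian
    rw [Matrix.IsHermitian, conjTranspose_eq_transpose_of_trivial]
    simp only [transpose_sub, transpose_smul, transpose_one, fromBlocks_transpose,
      transpose_add, transpose_mul, hB₁.eq, hB₂.eq, Matrix.mul_assoc]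
  · intro v hv
    obtain ⟨x, y, hv'⟩ : ∃ x y, v = Sum.elim x y :=
      ⟨v ∘ Sum.inl, v ∘ Sum.inr, funext fun i => by cases i <;> rfl⟩
    rw [star_trivial, hv', quad_id B₁ B₂ hB₁ x y β₁ c₂ lam]
    set w : Fin n → ℝ := B₁ *ᵥ x with hw
    set z : Fin n → ℝ := w + y with hz
    -- basic quadratic form facts
    have hq : m * (z ⬝ᵥ z) ≤ z ⬝ᵥ (B₂ *ᵥ z) := by
      have h := hB₂l.dotProduct_mulVec_nonneg z
      simp only [star_trivial, sub_mulVec, smul_mulVec, one_mulVec, dotProduct_sub,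
        dotProduct_smul, smul_eq_mul] at h
      linarith
    have hp1 : m * (x ⬝ᵥ x) ≤ x ⬝ᵥ (B₁ *ᵥ x) := by
      have h := hB₁l.dotProduct_mulVec_nonneg x
      simp only [star_trivial, sub_mulVec, smul_mulVec, one_mulVec, dotProduct_sub,
        dotProduct_smul, smul_eq_mul] at h
      linarith
    have hs : w ⬝ᵥ w ≤ M * (x ⬝ᵥ (B₁ *ᵥ x)) := by
      have hww : w ⬝ᵥ w = x ⬝ᵥ ((B₁ * B₁) *ᵥ x) := by
        rw [hw, dp_symm hB₁, mulVec_mulVec]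
      rw [hww]; exact key_bound B₁ hB₁psd M hB₁u x
    have hy : y = z - w := by rw [hz]; abel
    have hb : y ⬝ᵥ y = z ⬝ᵥ z - 2 * (z ⬝ᵥ w) + w ⬝ᵥ w := by
      rw [hy]
      simp only [dotProduct_sub, sub_dotProduct]
      rw [dotProduct_comm w z]
      ring
    have hzw : 0 ≤ z ⬝ᵥ z + 2 * (z ⬝ᵥ w) + w ⬝ᵥ w := by
      have h := dp_self_nonneg (z + w)
      simp only [dotProduct_add, add_dotProduct] at h
      rw [dotProduct_comm w z] at h
      linarith
    have g0 : lam * (y ⬝ᵥ y)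
        = lam * (z ⬝ᵥ z) - 2 * (lam * (z ⬝ᵥ w)) + lam * (w ⬝ᵥ w) := by
      rw [hb]; ring
    have g1 : 0 ≤ lam * (z ⬝ᵥ z + 2 * (z ⬝ᵥ w) + w ⬝ᵥ w) := mul_nonneg hlam0.le hzw
    have g2 : lam * (w ⬝ᵥ w) ≤ lam * (M * (x ⬝ᵥ (B₁ *ᵥ x))) :=
      mul_le_mul_of_nonneg_left hs hlam0.le
    have g3 : β₁ * (m * (z ⬝ᵥ z)) ≤ β₁ * (z ⬝ᵥ (B₂ *ᵥ z)) :=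
      mul_le_mul_of_nonneg_left hq hβ₁.le
    by_cases hx : x = 0
    · -- x = 0 case
      have hy0 : y ≠ 0 := by
        intro h
        apply hv
        rw [hv', hx, h]
        funext i; cases i <;> rfl
      have hbpos : 0 < y ⬝ᵥ y :=
        (dp_self_nonneg y).lt_of_ne fun h => hy0 (dotProduct_self_eq_zero.mp h.symm)
      have hw0 : w = 0 := by rw [hw, hx, mulVec_zero]
      have hs0 : w ⬝ᵥ w = 0 := by rw [hw0]; simp
      have ht0 : z ⬝ᵥ w = 0 := by rw [hw0]; simp
      have ha0 : x ⬝ᵥ x = 0 := by rw [hx]; simp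
      have hp0 : x ⬝ᵥ (B₁ *ᵥ x) = 0 := by rw [hx]; simp
      have hbr : y ⬝ᵥ y = z ⬝ᵥ z := by rw [hb, hs0, ht0]; ring
      have hrpos : 0 < z ⬝ᵥ z := hbr ▸ hbpos
      have glam : lam * (z ⬝ᵥ z) < β₁ * m * (z ⬝ᵥ z) :=
        mul_lt_mul_of_pos_right hlamlt hrpos
      have hp0' : c₂ * (x ⬝ᵥ (B₁ *ᵥ x)) = 0 := by rw [hp0]; ring
      have ha0' : lam * (x ⬝ᵥ x) = 0 := by rw [ha0]; ring
      have hbr' : lam * (y ⬝ᵥ y) = lam * (z ⬝ᵥ z) := by rw [hbr]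
      linarith [g3, glam, hp0', ha0', hbr']
    · -- x ≠ 0 case
      have haxpos : 0 < x ⬝ᵥ x :=
        (dp_self_nonneg x).lt_of_ne fun h => hx (dotProduct_self_eq_zero.mp h.symm)
      have g4 : (c₂ - 2 * lam * M) * (m * (x ⬝ᵥ x))
          ≤ (c₂ - 2 * lam * M) * (x ⬝ᵥ (B₁ *ᵥ x)) :=
        mul_le_mul_of_nonneg_left hp1 c1.le
      have g5 : 0 < ((c₂ - 2 * lam * M) * m - lam) * (x ⬝ᵥ x) := mul_pos c2 haxpos
      have g6 : 0 ≤ (β₁ * m - 2 * lam) * (z ⬝ᵥ z) :=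
        mul_nonneg (by linarith) (dp_self_nonneg z)
      linarith [g0, g1, g2, g3, g4, g5, g6]
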